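/- In any HR instance, every envy-free matching has size at most the size of a stable matching; hence if a stable matching is feasible in an HRLQ instance, it is a maximum-size feasible envy-free matching. -/

import Mathlib

/-- An HRLQ instance: bipartite graph on residents `R` and hospitals `H` with
strict preferences encoded as rank functions (lower rank = more preferred)
and lower/upper quotas per hospital. -/
structure HRLQ (R H : Type) where
  E : R → H → Prop
  rPref : R → H → ℕ
  hPref : H → R → ℕ
  lq : H → ℕ
  uq : H → ℕ

namespace HRLQ

variable {R H : Type}

/-- residents matched to hospital `h` -/
def matchedTo (M : R → Option H) (h : H) : Set R := {r | M r = some h}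

/-- size of a matching -/
noncomputable def msize (M : R → Option H) : ℕ := {r | M r ≠ none}.ncard

variable (I : HRLQ R H)

/-- resident `r` strictly prefers hospital `h` to assignment `o`
    (being unmatched is least preferred); `h` must be acceptable to `r`. -/
def PrefersH (r : R) (h : H) (o : Option H) : Prop :=
  I.E r h ∧ ∀ h', o = some h' → I.rPref r h < I.rPref r h'

def IsMatching (M : R → Option H) : Prop :=
  (∀ r h, M r = some h → I.E r h) ∧ ∀ h, (matchedTo M h).ncard ≤ I.uq h

def Feasible (M : R → Option H) : Prop :=
  ∀ h, I.lq h ≤ (matchedTo M h).ncard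

def Blocks (M : R → Option H) (r : R) (h : H) : Prop :=
  I.E r h ∧ M r ≠ some h ∧ I.PrefersH r h (M r) ∧
    ((matchedTo M h).ncard < I.uq h ∨ ∃ r' ∈ matchedTo M h, I.hPref h r < I.hPref h r')

def Stable (M : R → Option H) : Prop := ∀ r h, ¬ I.Blocks M r h

def Envies (M : R → Option H) (r r' : R) : Prop :=
  ∃ h, M r' = some h ∧ I.PrefersH r h (M r) ∧ I.hPref h r < I.hPref h r'

def EnvyFree (M : R → Option H) : Prop := ∀ r r', ¬ I.Envies M r r'

def RelaxedStable (M : R → Option H) : Prop :=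
  (∀ h, {r | r ∈ matchedTo M h ∧ ∃ h', I.Blocks M r h'}.ncard ≤ I.lq h) ∧
  ∀ r, M r = none → ∀ h, ¬ I.Blocks M r h

/-- preferences are strict -/
def StrictPrefs : Prop :=
  (∀ r, Function.Injective (I.rPref r)) ∧ ∀ h, Function.Injective (I.hPref h)

end HRLQ

/-! ### Auxiliary material for the proof -/

namespace HRLQ

variable {R H : Type}

/-- `prevR r0 a k` is the "incoming" resident of the `k`-th hospital of the
alternating walk: `r0` for `k = 0` and `a (k-1)` otherwise. -/
def prevR (r0 : R) (a : ℕ → R) : ℕ → R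
  | 0 => r0
  | k + 1 => a k

/-- An alternating walk of length `n` witnessing residents matched in `M`
but not in `Ms`.  `b 0` is the `M`-partner of `r0`; for `k < n`, `a k` lies in
`Ms(b k) \ M(b k)` and is matched in `M` to `b (k+1)`, which it strictly
prefers to `b k`. -/
def Walk (I : HRLQ R H) (M Ms : R → Option H) (r0 : R) (n : ℕ)
    (a : ℕ → R) (b : ℕ → H) : Prop :=
  (∀ i < n, ∀ j < n, a i = a j → i = j) ∧
  (∀ k < n, Ms (a k) = some (b k)) ∧
  (∀ k < n, M (a k) ≠ some (b k)) ∧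
  (∀ k < n, I.rPref (a k) (b (k + 1)) < I.rPref (a k) (b k)) ∧
  (∀ k ≤ n, M (prevR r0 a k) = some (b k)) ∧
  (∀ k ≤ n, Ms (prevR r0 a k) ≠ some (b k))

lemma stable_envyFree (I : HRLQ R H) (Ms : R → Option H) (hSt : I.Stable Ms) :
    I.EnvyFree Ms := by
  rintro r r' ⟨h, hm, hp, hh⟩
  refine hSt r h ⟨hp.1, ?_, hp, Or.inr ⟨r', hm, hh⟩⟩
  intro he
  exact lt_irrefl _ (hp.2 h he)

lemma ncard_matchedTo [Fintype R] (N : R → Option H) (h : H)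
    [DecidablePred fun r => N r = some h] :
    (matchedTo N h).ncard = (Finset.univ.filter fun r => N r = some h).card := by
  have he : matchedTo N h = ↑(Finset.univ.filter fun r => N r = some h) := by
    ext r; simp [matchedTo]
  rw [he, Set.ncard_coe_finset]

section Walk

variable [Fintype R] (I : HRLQ R H) (hstrict : I.StrictPrefs)
  (Ms : R → Option H) (hMs : I.IsMatching Ms) (hSt : I.Stable Ms)
  (M : R → Option H) (hM : I.IsMatching M) (hEF : I.EnvyFree M)
  (r0 : R) (hr0Ms : Ms r0 = none)

include hstrict hMs hSt hM hEF hr0Ms in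
lemma walk_extend (n : ℕ) (a : ℕ → R) (b : ℕ → H)
    (hw : I.Walk M Ms r0 n a b) :
    ∃ a' b', I.Walk M Ms r0 (n + 1) a' b' := by
  classical
  obtain ⟨inj, hms, hnm, hrk, hlink, hnms⟩ := hw
  set hstar := b n with hhstar
  have hprevM : M (prevR r0 a n) = some hstar := hlink n le_rfl
  have hprevNms : Ms (prevR r0 a n) ≠ some hstar := hnms n le_rfl
  -- the pair (prev n, b n) would block Ms unless `b n` is full with better residents
  have hpref : I.PrefersH (prevR r0 a n) hstar (Ms (prevR r0 a n)) := by
    refine ⟨hM.1 _ _ hprevM, ?_⟩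
    intro h' hh'
    cases n with
    | zero => rw [prevR, hr0Ms] at hh'; exact absurd hh' (by simp)
    | succ k =>
      have h1 := hms k (Nat.lt_succ_self k)
      rw [prevR] at hh' ⊢
      rw [h1] at hh'
      cases hh'
      exact hrk k (Nat.lt_succ_self k)
  have hnd : ¬((matchedTo Ms hstar).ncard < I.uq hstar ∨
      ∃ r' ∈ matchedTo Ms hstar,
        I.hPref hstar (prevR r0 a n) < I.hPref hstar r') :=
    fun hd => hSt (prevR r0 a n) hstar ⟨hpref.1, hprevNms, hpref, hd⟩
  push_neg at hnd
  obtain ⟨huq, hallpref⟩ := hnd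
  -- counting: find a fresh resident in Ms(b n) \ M(b n)
  set S : Finset R := Finset.univ.filter (fun r => M r = some hstar) with hS
  set T : Finset R := Finset.univ.filter (fun r => Ms r = some hstar) with hT
  have hScard : (matchedTo M hstar).ncard = S.card := ncard_matchedTo M hstar
  have hTcard : (matchedTo Ms hstar).ncard = T.card := ncard_matchedTo Ms hstar
  have hST : S.card ≤ T.card := by
    have h1 : S.card ≤ I.uq hstar := hScard ▸ hM.2 hstar
    have h2 : I.uq hstar ≤ T.card := hTcard ▸ huq
    omega
  have hdiff : (S \ T).card ≤ (T \ S).card := by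
    have e1 := Finset.card_inter_add_card_sdiff S T
    have e2 := Finset.card_inter_add_card_sdiff T S
    rw [Finset.inter_comm] at e2
    omega
  set K : Finset ℕ := (Finset.range (n + 1)).filter (fun k => b k = hstar) with hKdef
  set Kp : Finset ℕ := (Finset.range n).filter (fun k => b k = hstar) with hKpdef
  have hK : K = insert n Kp := by
    ext k
    simp only [hKdef, hKpdef, Finset.mem_filter, Finset.mem_range, Finset.mem_insert,
      Nat.lt_succ_iff]
    constructor
    · rintro ⟨hk, hbk⟩
      rcases Nat.lt_or_ge k n with h | h
      · exact Or.inr ⟨h, hbk⟩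
      · exact Or.inl (le_antisymm hk h)
    · rintro (rfl | ⟨hk, hbk⟩)
      · exact ⟨le_rfl, rfl⟩
      · exact ⟨le_of_lt hk, hbk⟩
  have hnKp : n ∉ Kp := by simp [hKpdef]
  have hKcard : K.card = Kp.card + 1 := by rw [hK, Finset.card_insert_of_notMem hnKp]
  have hprevmem : ∀ k ∈ K, prevR r0 a k ∈ S \ T := by
    intro k hk
    simp only [hKdef, Finset.mem_filter, Finset.mem_range, Nat.lt_succ_iff] at hk
    obtain ⟨hkn, hbk⟩ := hk
    simp only [Finset.mem_sdiff, hS, hT, Finset.mem_filter, Finset.mem_univ, true_and]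
    exact ⟨hbk ▸ hlink k hkn, hbk ▸ hnms k hkn⟩
  have hr0ne : ∀ i < n, r0 ≠ a i := by
    intro i hi he
    rw [he] at hr0Ms
    rw [hms i hi] at hr0Ms
    exact Option.some_ne_none _ hr0Ms
  have hprevinj : Set.InjOn (prevR r0 a) (K : Set ℕ) := by
    intro i hi j hj hij
    simp only [Finset.coe_filter, Set.mem_setOf_eq, Finset.mem_range, Nat.lt_succ_iff,
      hKdef] at hi hj
    match i, j with
    | 0, 0 => rfl
    | 0, j + 1 =>
      exact absurd hij (hr0ne j (Nat.lt_of_succ_le hj.1))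
    | i + 1, 0 =>
      exact absurd hij.symm (hr0ne i (Nat.lt_of_succ_le hi.1))
    | i + 1, j + 1 =>
      have := inj i (Nat.lt_of_succ_le hi.1) j (Nat.lt_of_succ_le hj.1) hij
      omega
  have hKle : K.card ≤ (S \ T).card :=
    Finset.card_le_card_of_injOn _ hprevmem hprevinj
  set U : Finset R := Kp.image a with hUdef
  have hUsub : U ⊆ T \ S := by
    intro x hx
    simp only [hUdef, Finset.mem_image] at hx
    obtain ⟨k, hk, rfl⟩ := hx
    simp only [hKpdef, Finset.mem_filter, Finset.mem_range] at hk
    obtain ⟨hkn, hbk⟩ := hk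
    simp only [Finset.mem_sdiff, hS, hT, Finset.mem_filter, Finset.mem_univ, true_and]
    exact ⟨hbk ▸ hms k hkn, hbk ▸ hnm k hkn⟩
  have hUcard : U.card ≤ Kp.card := Finset.card_image_le
  have hfresh : ∃ x, x ∈ T \ S ∧ x ∉ U := by
    have hlt : U.card < (T \ S).card := by omega
    have hpos : 0 < ((T \ S) \ U).card := by
      rw [Finset.card_sdiff_of_subset hUsub]; omega
    obtain ⟨x, hx⟩ := Finset.card_pos.mp hpos
    rw [Finset.mem_sdiff] at hx
    exact ⟨x, hx.1, hx.2⟩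
  obtain ⟨x, hxTS, hxU⟩ := hfresh
  rw [Finset.mem_sdiff] at hxTS
  have hxT : Ms x = some hstar := by
    have := hxTS.1; simp only [hT, Finset.mem_filter] at this; exact this.2
  have hxS : M x ≠ some hstar := by
    intro he
    exact hxTS.2 (by simp only [hS, Finset.mem_filter, Finset.mem_univ, true_and]; exact he)
  -- x is matched in M, to a hospital it strictly prefers to b n (else it envies prev n)
  have hxlt : I.hPref hstar x < I.hPref hstar (prevR r0 a n) := by
    have hle := hallpref x hxT
    have hne : x ≠ prevR r0 a n := fun he => hprevNms (he ▸ hxT)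
    exact lt_of_le_of_ne hle (fun he => hne (hstrict.2 hstar he))
  have hnext : ∃ h', M x = some h' ∧ I.rPref x h' < I.rPref x hstar := by
    by_contra hcon
    push_neg at hcon
    refine hEF x (prevR r0 a n) ⟨hstar, hprevM, ⟨hMs.1 x hstar hxT, ?_⟩, hxlt⟩
    intro h' hh'
    have hle := hcon h' hh'
    have hne : hstar ≠ h' := fun he => hxS (he ▸ hh')
    exact lt_of_le_of_ne hle (fun he => hne (hstrict.1 x he))
  obtain ⟨hnx, hxM, hxrk⟩ := hnext
  -- extend the walk
  have hxa : ∀ i < n, x ≠ a i := by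
    intro i hin he
    by_cases hbi : b i = hstar
    · exact hxU (by
        simp only [hUdef, Finset.mem_image]
        exact ⟨i, by simp [hKpdef, Finset.mem_filter, Finset.mem_range, hin, hbi], he.symm⟩)
    · have h1 := hms i hin
      rw [← he] at h1
      rw [hxT] at h1
      exact hbi (Option.some.inj h1).symm
  have ea : ∀ k, k ≠ n → Function.update a n x k = a k :=
    fun k hk => Function.update_of_ne hk _ _
  have eb : ∀ k, k ≠ n + 1 → Function.update b (n + 1) hnx k = b k :=
    fun k hk => Function.update_of_ne hk _ _
  have ep : ∀ k ≤ n, prevR r0 (Function.update a n x) k = prevR r0 a k := by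
    intro k hk
    cases k with
    | zero => rfl
    | succ j => rw [prevR, prevR, ea j (by omega)]
  refine ⟨Function.update a n x, Function.update b (n + 1) hnx, ?_, ?_, ?_, ?_, ?_, ?_⟩
  · -- injectivity
    intro i hi j hj hij
    rcases Nat.lt_or_ge i n with hi' | hi' <;> rcases Nat.lt_or_ge j n with hj' | hj'
    · rw [ea i (by omega), ea j (by omega)] at hij
      exact inj i hi' j hj' hij
    · have hj'' : j = n := by omega
      subst hj''
      rw [ea i (by omega), Function.update_self] at hij
      exact absurd hij.symm (hxa i hi')
    · have hi'' : i = n := by omega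
      subst hi''
      rw [Function.update_self, ea j (by omega)] at hij
      exact absurd hij (hxa j hj')
    · omega
  · -- Ms (a k) = some (b k)
    intro k hk
    rcases Nat.lt_or_ge k n with hk' | hk'
    · rw [ea k (by omega), eb k (by omega)]
      exact hms k hk'
    · have : k = n := by omega
      subst this
      rw [Function.update_self, eb k (by omega)]
      exact hxT
  · -- M (a k) ≠ some (b k)
    intro k hk
    rcases Nat.lt_or_ge k n with hk' | hk'
    · rw [ea k (by omega), eb k (by omega)]
      exact hnm k hk'
    · have : k = n := by omega
      subst this
      rw [Function.update_self, eb k (by omega)]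
      exact hxS
  · -- rank decrease
    intro k hk
    rcases Nat.lt_or_ge k n with hk' | hk'
    · rw [ea k (by omega), eb k (by omega), eb (k + 1) (by omega)]
      exact hrk k hk'
    · have : k = n := by omega
      subst this
      rw [Function.update_self, eb k (by omega), Function.update_self]
      exact hxrk
  · -- M (prev k) = some (b k)
    intro k hk
    rcases Nat.lt_or_ge k (n + 1) with hk' | hk'
    · rw [eb k (by omega), ep k (by omega)]
      exact hlink k (by omega)
    · have : k = n + 1 := by omega
      subst this
      rw [Function.update_self, prevR, Function.update_self]
      exact hxM
  · -- Ms (prev k) ≠ some (b k)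
    intro k hk
    rcases Nat.lt_or_ge k (n + 1) with hk' | hk'
    · rw [eb k (by omega), ep k (by omega)]
      exact hnms k (by omega)
    · have : k = n + 1 := by omega
      subst this
      rw [Function.update_self, prevR, Function.update_self, hxT]
      intro he
      have heq : hstar = hnx := Option.some.inj he
      rw [heq] at hxrk
      exact lt_irrefl _ hxrk

include hstrict hMs hSt hM hEF hr0Ms in
lemma walk_exists (h0 : H) (hr0M : M r0 = some h0) :
    ∀ n, ∃ a b, I.Walk M Ms r0 n a b := by
  intro n
  induction n with
  | zero =>
    refine ⟨fun _ => r0, fun _ => h0, ?_, ?_, ?_, ?_, ?_, ?_⟩ <;>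
      first
        | (intro k hk; exact absurd hk (Nat.not_lt_zero k))
        | (intro k hk
           interval_cases k
           · simpa [prevR] using hr0M)
        | (intro k hk
           interval_cases k
           · rw [prevR, hr0Ms]; simp)
  | succ n ih =>
    obtain ⟨a, b, hw⟩ := ih
    exact walk_extend I hstrict Ms hMs hSt M hM hEF r0 hr0Ms n a b hw

include hstrict hMs hSt hM hEF in
lemma matched_subset :
    ∀ r, M r ≠ none → Ms r ≠ none := by
  intro r hr hnone
  obtain ⟨h0, hh0⟩ := Option.ne_none_iff_exists'.mp hr
  obtain ⟨a, b, hw⟩ := walk_exists I hstrict Ms hMs hSt M hM hEF r hnone h0 hh0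
    (Fintype.card R + 1)
  obtain ⟨inj, hms, -, -, -, -⟩ := hw
  have hfinj : Function.Injective (fun k : Fin (Fintype.card R + 1) => a k.1) := by
    intro i j hij
    exact Fin.ext (inj i.1 i.2 j.1 j.2 hij)
  have := Fintype.card_le_of_injective _ hfinj
  simp at this

end Walk

end HRLQ

/-- Every envy-free matching has size at most that of a stable matching; hence a
feasible stable matching is a maximum-size feasible envy-free matching. -/
theorem envy_free_le_stable_size_and_feasible_stable_is_maxefm
    {R H : Type} [Fintype R] [Fintype H] (I : HRLQ R H)
    (hstrict : I.StrictPrefs)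
    (Ms : R → Option H) (hMs : I.IsMatching Ms) (hMsStable : I.Stable Ms) :
    (∀ Me, I.IsMatching Me → I.EnvyFree Me → HRLQ.msize Me ≤ HRLQ.msize Ms) ∧
    (I.Feasible Ms →
      I.EnvyFree Ms ∧
      ∀ M', I.IsMatching M' → I.Feasible M' → I.EnvyFree M' →
        HRLQ.msize M' ≤ HRLQ.msize Ms) := by
  have main : ∀ Me, I.IsMatching Me → I.EnvyFree Me →
      HRLQ.msize Me ≤ HRLQ.msize Ms := by
    intro Me hMe hEF
    have hsub : {r | Me r ≠ none} ⊆ {r | Ms r ≠ none} :=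
      fun r hr => HRLQ.matched_subset I hstrict Ms hMs hMsStable Me hMe hEF r hr
    exact Set.ncard_le_ncard hsub (Set.toFinite _)
  exact ⟨main, fun _ =>
    ⟨HRLQ.stable_envyFree I Ms hMsStable,
     fun M' hM' _ hEF' => main M' hM' hEF'⟩⟩
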